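/- For 0 ≤ α < 1, let R = 2(1−α)/(3 + √(9 + 4(2−α)(1−α))). Then R ∈ (0,1) and for all r ∈ [0, R], (1 − 3r − 2r²)/(1−r²) ≥ α, with equality at r = R; equivalently (2−α)r² + 3r + α − 1 ≤ 0 on [0, R] with equality at R. -/

import Mathlib

open Real Set

theorem F3_starlike_order_radius_computation (α : ℝ) (hα0 : 0 ≤ α) (hα1 : α < 1) :
    let R : ℝ := 2 * (1 - α) / (3 + Real.sqrt (9 + 4 * (2 - α) * (1 - α)))
    (0 < R ∧ R < 1) ∧
    (∀ r ∈ Icc (0 : ℝ) R,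
      (1 - 3 * r - 2 * r ^ 2) / (1 - r ^ 2) ≥ α ∧
      (2 - α) * r ^ 2 + 3 * r + α - 1 ≤ 0) ∧
    (1 - 3 * R - 2 * R ^ 2) / (1 - R ^ 2) = α ∧
    (2 - α) * R ^ 2 + 3 * R + α - 1 = 0 := by
  intro R
  have h1α : 0 < 1 - α := by linarith
  have h2α : 0 < 2 - α := by linarith
  set s := Real.sqrt (9 + 4 * (2 - α) * (1 - α)) with hs
  have hs2 : s ^ 2 = 9 + 4 * (2 - α) * (1 - α) := by
    rw [hs, sq_sqrt]; nlinarith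
  have hsnn : 0 ≤ s := Real.sqrt_nonneg _
  have hs3 : 3 < s := by nlinarith
  have hden : 0 < 3 + s := by linarith
  have hRdef : R = 2 * (1 - α) / (3 + s) := rfl
  have hR0 : 0 < R := by rw [hRdef]; exact div_pos (by linarith) hden
  have hR1 : R < 1 := by rw [hRdef, div_lt_one hden]; linarith
  have hquad : (2 - α) * R ^ 2 + 3 * R + α - 1 = 0 := by
    rw [hRdef]; field_simp; linear_combination -(1 - α) * hs2
  have hR2 : 0 < 1 - R ^ 2 := by nlinarith
  refine ⟨⟨hR0, hR1⟩, ?_, ?_, hquad⟩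
  · rintro r ⟨hr0, hrR⟩
    have hq : (2 - α) * r ^ 2 + 3 * r + α - 1 ≤ 0 := by
      nlinarith [mul_nonneg (sub_nonneg.mpr hrR) (add_nonneg hR0.le hr0)]
    have hr1 : 0 < 1 - r ^ 2 := by nlinarith
    exact ⟨by rw [ge_iff_le, le_div_iff₀ hr1]; nlinarith, hq⟩
  · rw [div_eq_iff (ne_of_gt hR2)]; nlinarith
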